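/- Let M be an Orlicz function, 1 ≤ p < ∞ and m ≥ 1, n ≥ 1 integers. Then C_p(M) ⊆ C_p(M, Δ_m^n); that is, if a real sequence x satisfies Σ_{i=1}^∞ ((1/i) Σ_{k=1}^{i} M(|x_k|/ρ))^p < ∞ for some ρ > 0, then Σ_{i=1}^∞ ((1/i) Σ_{k=1}^{i} M(|Δ_m^n x_k|/ρ'))^p < ∞ for some ρ' > 0. -/

import Mathlib

/-!
Statement 18 (Paper: Theorem 3.6(b)).  `C_p(M) ⊆ C_p(M, Δ_m^n)`:
if `∑_{i=1}^∞ ((1/i) ∑_{k=1}^{i} M(|x_k|/ρ))^p < ∞` for some `ρ > 0`, then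
`∑_{i=1}^∞ ((1/i) ∑_{k=1}^{i} M(|Δ_m^n x_k|/ρ'))^p < ∞` for some `ρ' > 0`.
Sequences are indexed so that `x k` represents the paper's `x_{k+1}`.
-/

open scoped ENNReal

/-- An Orlicz function. -/
def IsOrliczFunction (M : ℝ → ℝ) : Prop :=
  ContinuousOn M (Set.Ici 0) ∧ MonotoneOn M (Set.Ici 0) ∧ ConvexOn ℝ (Set.Ici 0) M ∧
    M 0 = 0 ∧ (∀ x : ℝ, 0 < x → 0 < M x) ∧ Filter.Tendsto M Filter.atTop Filter.atTop

/-- The generalized difference operator. -/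
def delta (m : ℕ) : ℕ → (ℕ → ℝ) → ℕ → ℝ
  | 0, x => x
  | n + 1, x => fun k => delta m n x k - delta m n x (k + m)

/-- The Cesàro average `(1/i) ∑_{k=1}^{i} M (|x_k| / ρ)`, where `i` here is `i+1`. -/
noncomputable def cesTerm (M : ℝ → ℝ) (x : ℕ → ℝ) (ρ : ℝ) (i : ℕ) : ℝ :=
  (1 / (i + 1 : ℝ)) * ∑ k ∈ Finset.range (i + 1), M (|x k| / ρ)

/-- `∑_{i=1}^∞ ((1/i) ∑_{k=1}^{i} M(|x_k|/ρ))^p`, valued in `ℝ≥0∞`. -/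
noncomputable def cesaroSum (M : ℝ → ℝ) (p : ℝ) (x : ℕ → ℝ) (ρ : ℝ) : ℝ≥0∞ :=
  ∑' i : ℕ, ENNReal.ofReal (cesTerm M x ρ i) ^ p

lemma orlicz_nonneg {M : ℝ → ℝ} (hM : IsOrliczFunction M) {t : ℝ} (ht : 0 ≤ t) : 0 ≤ M t := by
  obtain ⟨-, hmono, -, h0, -, -⟩ := hM
  have := hmono (Set.mem_Ici.mpr le_rfl) (Set.mem_Ici.mpr ht) ht
  linarith

lemma delta_pointwise {M : ℝ → ℝ} (hM : IsOrliczFunction M) {ρ : ℝ} (hρ : 0 < ρ)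
    (m : ℕ) (x : ℕ → ℝ) (n k : ℕ) :
    M (|delta m n x k| / (2 ^ n * ρ)) ≤
      2 ^ n * ∑ j ∈ Finset.range (n + 1), M (|x (k + j * m)| / ρ) := by
  have hmono := hM.2.1
  induction n generalizing k with
  | zero => simp [delta]
  | succ n ih =>
    set a := |delta m n x k| / (2 ^ n * ρ) with ha
    set b := |delta m n x (k + m)| / (2 ^ n * ρ) with hb
    have ha0 : 0 ≤ a := by positivity
    have hb0 : 0 ≤ b := by positivity
    have harg : |delta m (n + 1) x k| / (2 ^ (n + 1) * ρ) ≤ max a b := by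
      have h1 : |delta m (n + 1) x k| ≤ |delta m n x k| + |delta m n x (k + m)| := by
        simpa [delta] using abs_sub (delta m n x k) (delta m n x (k + m))
      have h2 : |delta m (n + 1) x k| / (2 ^ (n + 1) * ρ) ≤ (a + b) / 2 := by
        rw [ha, hb, ← add_div, div_div]
        have : (2:ℝ) ^ n * ρ * 2 = 2 ^ (n + 1) * ρ := by ring
        rw [this]
        exact div_le_div_of_nonneg_right h1 (by positivity)
      exact h2.trans (by rcases le_total a b with h | h <;> rw [max_def] <;> split <;> linarith)
    have harg0 : (0:ℝ) ≤ |delta m (n + 1) x k| / (2 ^ (n + 1) * ρ) := by positivity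
    have hMmax : M (|delta m (n + 1) x k| / (2 ^ (n + 1) * ρ)) ≤ M a + M b := by
      rcases le_total a b with hab | hab
      · have h := hmono (Set.mem_Ici.mpr harg0) (Set.mem_Ici.mpr hb0)
          (harg.trans_eq (max_eq_right hab))
        linarith [orlicz_nonneg hM ha0]
      · have h := hmono (Set.mem_Ici.mpr harg0) (Set.mem_Ici.mpr ha0)
          (harg.trans_eq (max_eq_left hab))
        linarith [orlicz_nonneg hM hb0]
    have hSk : ∑ j ∈ Finset.range (n + 1), M (|x (k + j * m)| / ρ) ≤
        ∑ j ∈ Finset.range (n + 2), M (|x (k + j * m)| / ρ) := by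
      apply Finset.sum_le_sum_of_subset_of_nonneg
      · exact Finset.range_subset_range.mpr (by omega)
      · intro j _ _; exact orlicz_nonneg hM (by positivity)
    have hSkm : ∑ j ∈ Finset.range (n + 1), M (|x (k + m + j * m)| / ρ) ≤
        ∑ j ∈ Finset.range (n + 2), M (|x (k + j * m)| / ρ) := by
      have hidx : ∀ j, k + m + j * m = k + (j + 1) * m := by intro j; ring
      have : ∑ j ∈ Finset.range (n + 1), M (|x (k + m + j * m)| / ρ) =
          ∑ j ∈ Finset.range (n + 1), M (|x (k + (j + 1) * m)| / ρ) := by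
        apply Finset.sum_congr rfl; intro j _; rw [hidx j]
      rw [this, Finset.sum_range_succ' (fun j => M (|x (k + j * m)| / ρ)) (n + 1)]
      have : (0:ℝ) ≤ M (|x (k + 0 * m)| / ρ) := orlicz_nonneg hM (by positivity)
      linarith
    have iha := ih k
    have ihb := ih (k + m)
    have h2n : (0:ℝ) ≤ 2 ^ n := by positivity
    calc M (|delta m (n + 1) x k| / (2 ^ (n + 1) * ρ)) ≤ M a + M b := hMmax
      _ ≤ 2 ^ n * ∑ j ∈ Finset.range (n + 1), M (|x (k + j * m)| / ρ)
          + 2 ^ n * ∑ j ∈ Finset.range (n + 1), M (|x (k + m + j * m)| / ρ) := by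
            exact add_le_add iha ihb
      _ ≤ 2 ^ n * ∑ j ∈ Finset.range (n + 2), M (|x (k + j * m)| / ρ)
          + 2 ^ n * ∑ j ∈ Finset.range (n + 2), M (|x (k + j * m)| / ρ) := by
            exact add_le_add (by nlinarith) (by nlinarith)
      _ = 2 ^ (n + 1) * ∑ j ∈ Finset.range (n + 1 + 1), M (|x (k + j * m)| / ρ) := by ring

lemma cesTerm_bound {M : ℝ → ℝ} (hM : IsOrliczFunction M) {ρ : ℝ} (hρ : 0 < ρ)
    (m n : ℕ) (x : ℕ → ℝ) (i : ℕ) :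
    cesTerm M (delta m n x) (2 ^ n * ρ) i ≤
      (2 ^ n * (n + 1) * (n * m + 1) : ℝ) * cesTerm M x ρ (i + n * m) := by
  have key : ∑ k ∈ Finset.range (i + 1), M (|delta m n x k| / (2 ^ n * ρ)) ≤
      2 ^ n * (n + 1) * ∑ k ∈ Finset.range (i + 1 + n * m), M (|x k| / ρ) := by
    calc ∑ k ∈ Finset.range (i + 1), M (|delta m n x k| / (2 ^ n * ρ))
        ≤ ∑ k ∈ Finset.range (i + 1),
            (2 ^ n * ∑ j ∈ Finset.range (n + 1), M (|x (k + j * m)| / ρ)) := by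
          exact Finset.sum_le_sum fun k _ => delta_pointwise hM hρ m x n k
      _ = 2 ^ n * ∑ j ∈ Finset.range (n + 1),
            ∑ k ∈ Finset.range (i + 1), M (|x (k + j * m)| / ρ) := by
          rw [← Finset.mul_sum, Finset.sum_comm]
      _ ≤ 2 ^ n * ∑ j ∈ Finset.range (n + 1),
            ∑ k ∈ Finset.range (i + 1 + n * m), M (|x k| / ρ) := by
          apply mul_le_mul_of_nonneg_left ?_ (by positivity)
          apply Finset.sum_le_sum
          intro j hj
          have hinj : Function.Injective (fun k : ℕ => k + j * m) := add_left_injective (j * m)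
          calc ∑ k ∈ Finset.range (i + 1), M (|x (k + j * m)| / ρ)
              = ∑ k ∈ (Finset.range (i + 1)).image (fun k => k + j * m), M (|x k| / ρ) := by
                rw [Finset.sum_image (fun a _ b _ h => hinj h)]
            _ ≤ ∑ k ∈ Finset.range (i + 1 + n * m), M (|x k| / ρ) := by
                apply Finset.sum_le_sum_of_subset_of_nonneg
                · intro k hk
                  simp only [Finset.mem_image, Finset.mem_range] at hk ⊢
                  obtain ⟨a, haa, rfl⟩ := hk
                  have hjn : j < n + 1 := Finset.mem_range.mp hj
                  have hmul : j * m ≤ n * m := Nat.mul_le_mul_right m (by omega)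
                  show a + j * m < i + 1 + n * m
                  omega
                · intro k _ _; exact orlicz_nonneg hM (by positivity)
      _ = 2 ^ n * (n + 1) * ∑ k ∈ Finset.range (i + 1 + n * m), M (|x k| / ρ) := by
          rw [Finset.sum_const, Finset.card_range]; push_cast; ring
  unfold cesTerm
  have hi1 : (0:ℝ) < (i:ℝ) + 1 := by positivity
  have hratio : (1 : ℝ) / ((i:ℝ) + 1) ≤ ((n:ℝ) * m + 1) * (1 / ((i + n * m : ℕ) + 1)) := by
    have h1 : (0:ℝ) < ((i + n * m : ℕ) : ℝ) + 1 := by positivity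
    rw [mul_one_div, div_le_div_iff₀ hi1 h1]
    push_cast
    nlinarith [mul_nonneg (Nat.cast_nonneg n : (0:ℝ) ≤ n) (Nat.cast_nonneg m : (0:ℝ) ≤ m),
      (Nat.cast_nonneg i : (0:ℝ) ≤ i),
      mul_nonneg (mul_nonneg (Nat.cast_nonneg n : (0:ℝ) ≤ n) (Nat.cast_nonneg m : (0:ℝ) ≤ m))
        (Nat.cast_nonneg i : (0:ℝ) ≤ i)]
  have hsum0 : (0:ℝ) ≤ ∑ k ∈ Finset.range (i + 1), M (|delta m n x k| / (2 ^ n * ρ)) :=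
    Finset.sum_nonneg fun k _ => orlicz_nonneg hM (by positivity)
  have hsum1 : (0:ℝ) ≤ ∑ k ∈ Finset.range (i + 1 + n * m), M (|x k| / ρ) :=
    Finset.sum_nonneg fun k _ => orlicz_nonneg hM (by positivity)
  have hr0 : (0:ℝ) ≤ 1 / ((i:ℝ) + 1) := by positivity
  calc (1 / ((i:ℝ) + 1)) * ∑ k ∈ Finset.range (i + 1), M (|delta m n x k| / (2 ^ n * ρ))
      ≤ (1 / ((i:ℝ) + 1)) * (2 ^ n * (n + 1) * ∑ k ∈ Finset.range (i + 1 + n * m), M (|x k| / ρ)) :=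
        mul_le_mul_of_nonneg_left key hr0
    _ ≤ (((n:ℝ) * m + 1) * (1 / ((i + n * m : ℕ) + 1))) *
          (2 ^ n * (n + 1) * ∑ k ∈ Finset.range (i + 1 + n * m), M (|x k| / ρ)) := by
        apply mul_le_mul_of_nonneg_right hratio (by positivity)
    _ = (2 ^ n * (n + 1) * (n * m + 1) : ℝ) *
          ((1 / ((i + n * m : ℕ) + 1)) * ∑ k ∈ Finset.range ((i + n * m) + 1), M (|x k| / ρ)) := by
        have : i + 1 + n * m = (i + n * m) + 1 := by omega
        rw [this]; push_cast; ring

theorem Cp_subset_CpDelta (M : ℝ → ℝ) (hM : IsOrliczFunction M) (p : ℝ) (hp : 1 ≤ p)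
    (m n : ℕ) (hm : 1 ≤ m) (hn : 1 ≤ n) (x : ℕ → ℝ)
    (h : ∃ ρ > 0, cesaroSum M p x ρ < ⊤) :
    ∃ ρ' > 0, cesaroSum M p (delta m n x) ρ' < ⊤ := by
  obtain ⟨ρ, hρ, hfin⟩ := h
  refine ⟨2 ^ n * ρ, by positivity, ?_⟩
  set C : ℝ := 2 ^ n * (n + 1) * (n * m + 1) with hC
  have hC0 : (0:ℝ) ≤ C := by positivity
  have hp0 : (0:ℝ) ≤ p := by linarith
  have hterm : ∀ i, ENNReal.ofReal (cesTerm M (delta m n x) (2 ^ n * ρ) i) ^ p ≤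
      ENNReal.ofReal C ^ p * ENNReal.ofReal (cesTerm M x ρ (i + n * m)) ^ p := by
    intro i
    have h1 := cesTerm_bound hM hρ m n x i
    calc ENNReal.ofReal (cesTerm M (delta m n x) (2 ^ n * ρ) i) ^ p
        ≤ ENNReal.ofReal (C * cesTerm M x ρ (i + n * m)) ^ p :=
          ENNReal.rpow_le_rpow (ENNReal.ofReal_le_ofReal h1) hp0
      _ = (ENNReal.ofReal C * ENNReal.ofReal (cesTerm M x ρ (i + n * m))) ^ p := by
          rw [ENNReal.ofReal_mul hC0]
      _ = ENNReal.ofReal C ^ p * ENNReal.ofReal (cesTerm M x ρ (i + n * m)) ^ p :=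
          ENNReal.mul_rpow_of_nonneg _ _ hp0
  have hshift : ∑' i : ℕ, ENNReal.ofReal (cesTerm M x ρ (i + n * m)) ^ p ≤ cesaroSum M p x ρ := by
    exact ENNReal.tsum_comp_le_tsum_of_injective (add_left_injective (n * m)) _
  calc cesaroSum M p (delta m n x) (2 ^ n * ρ)
      ≤ ∑' i : ℕ, ENNReal.ofReal C ^ p * ENNReal.ofReal (cesTerm M x ρ (i + n * m)) ^ p :=
        ENNReal.tsum_le_tsum hterm
    _ = ENNReal.ofReal C ^ p * ∑' i : ℕ, ENNReal.ofReal (cesTerm M x ρ (i + n * m)) ^ p :=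
        ENNReal.tsum_mul_left
    _ ≤ ENNReal.ofReal C ^ p * cesaroSum M p x ρ :=
        mul_le_mul_right hshift _
    _ < ⊤ := ENNReal.mul_lt_top (ENNReal.rpow_lt_top_of_nonneg hp0 ENNReal.ofReal_ne_top) hfin
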